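/- Suppose two abelian types T = (g, h, ρ) and T′ = (g, h, ρ′) are given, with respect to fixed bases z of g and x_1, …, x_n of h, by the triples (λ, R, M) and (λ, R, M′) respectively. Then T is isomorphic to T′ if and only if there exist an invertible n×n matrix G and a nonzero scalar γ such that ĜR = RG, γ^pλ = γλ, and M′ = γ·G^{−1}MG, where Ĝ is obtained from G by taking the p-th power of every entry. -/

import Mathlib

set_option linter.unusedSectionVars false

open scoped TensorProduct

attribute [local instance 100] LieRing.ofAssociativeRing

namespace PD

/-- An abelian restricted Lie algebra over `k` (of characteristic `p`): an abelian Lie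
algebra (trivial bracket) together with its restricted `p`-th power map, which for an
abelian Lie algebra is additive and Frobenius-semilinear. -/
class AbRes (p : ℕ) (k : Type) (V : Type) [Field k] [AddCommGroup V] [Module k V] :
    Type where
  pMap : V → V
  pMap_add : ∀ x y : V, pMap (x + y) = pMap x + pMap y
  pMap_smul : ∀ (a : k) (x : V), pMap (a • x) = a ^ p • pMap x

/-- Type synonym equipping a module with its trivial (abelian) Lie algebra structure. -/
def Ab (V : Type) : Type := V

instance (V : Type) [AddCommGroup V] : AddCommGroup (Ab V) := inferInstanceAs (AddCommGroup V)

instance (k V : Type) [Field k] [AddCommGroup V] [Module k V] : Module k (Ab V) :=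
  inferInstanceAs (Module k V)

instance (V : Type) [AddCommGroup V] : LieRing (Ab V) :=
  { (inferInstance : AddCommGroup (Ab V)) with
    bracket := fun _ _ => 0
    add_lie := by intros; simp
    lie_add := by intros; simp
    lie_self := by intros; rfl
    leibniz_lie := by intros; simp }

instance (k V : Type) [Field k] [AddCommGroup V] [Module k V] : LieAlgebra k (Ab V) :=
  { (inferInstance : Module k (Ab V)) with
    lie_smul := by intros; show (0 : Ab V) = _ • (0 : Ab V); simp }

/-- The identity of `V`, viewed as a linear equivalence `V ≃ Ab V`. -/
def toAb (k V : Type) [Field k] [AddCommGroup V] [Module k V] : V ≃ₗ[k] Ab V :=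
  LinearEquiv.refl k V

section Core

variable (p : ℕ) [Fact (Nat.Prime p)] (k : Type) [Field k] [CharP k p]
variable (V : Type) [AddCommGroup V] [Module k V]
variable [AbRes p k V]

/-- The relation defining `u(h) = U(h)/(x^p - x^{[p]})`. -/
def uRel : UniversalEnvelopingAlgebra k (Ab V) → UniversalEnvelopingAlgebra k (Ab V) → Prop :=
  fun a b => ∃ x : V,
    a = (UniversalEnvelopingAlgebra.ι k (toAb k V x) : UniversalEnvelopingAlgebra k (Ab V)) ^ p ∧
    b = UniversalEnvelopingAlgebra.ι k (toAb k V (AbRes.pMap (p := p) (k := k) x))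

/-- The restricted universal enveloping algebra `u(h) := U(h)/(x^p − x^{[p]}, x ∈ h)`. -/
abbrev uRes : Type := RingQuot (uRel p k V)

/-- The canonical linear map `h → u(h)`. -/
noncomputable def mkι : V →ₗ[k] uRes p k V :=
  (RingQuot.mkAlgHom k (uRel p k V)).toLinearMap.comp
    ((UniversalEnvelopingAlgebra.ι k).toLinearMap.comp (toAb k V).toLinearMap)

lemma uea_comm (a b : Ab V) :
    (UniversalEnvelopingAlgebra.ι k a : UniversalEnvelopingAlgebra k (Ab V)) *
      UniversalEnvelopingAlgebra.ι k b =
    UniversalEnvelopingAlgebra.ι k b * UniversalEnvelopingAlgebra.ι k a := by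
  have h := (UniversalEnvelopingAlgebra.ι (R := k) (L := Ab V)).map_lie a b
  rw [show ⁅a, b⁆ = (0 : Ab V) from rfl, map_zero,
    LieRing.of_associative_ring_bracket] at h
  exact sub_eq_zero.1 h.symm

lemma mkι_comm (x y : V) : mkι p k V x * mkι p k V y = mkι p k V y * mkι p k V x := by
  show (RingQuot.mkAlgHom k (uRel p k V)) (UniversalEnvelopingAlgebra.ι k (toAb k V x)) *
      (RingQuot.mkAlgHom k (uRel p k V)) (UniversalEnvelopingAlgebra.ι k (toAb k V y)) = _
  rw [← map_mul (RingQuot.mkAlgHom k (uRel p k V)), uea_comm, map_mul]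
  rfl

lemma mkι_pow (x : V) :
    mkι p k V x ^ p = mkι p k V (AbRes.pMap (p := p) (k := k) x) := by
  show (RingQuot.mkAlgHom k (uRel p k V)) (UniversalEnvelopingAlgebra.ι k (toAb k V x)) ^ p = _
  rw [← map_pow]
  exact RingQuot.mkAlgHom_rel k ⟨x, rfl, rfl⟩

/-- Freshman's dream in any `k`-algebra (`k` of characteristic `p`), for commuting
elements. -/
lemma add_pow_charP {A : Type} [Ring A] [Algebra k A] {x y : A} (h : Commute x y) :
    (x + y) ^ p = x ^ p + y ^ p := by
  obtain ⟨r, hr⟩ := h.exists_add_pow_prime_eq (Fact.out : Nat.Prime p)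
  have hp0 : ((p : ℕ) : A) = 0 := by
    rw [← map_natCast (algebraMap k A) p, CharP.cast_eq_zero k p, map_zero]
  rw [hr, hp0]
  simp

/-- Build a Lie algebra morphism (for the trivial bracket on `V`) from a linear map with
pairwise commuting images. -/
noncomputable def lieHomOfLinear {A : Type} [Ring A] [Algebra k A] (f : V →ₗ[k] A)
    (hf : ∀ x y : V, f x * f y = f y * f x) : Ab V →ₗ⁅k⁆ A :=
  { toLinearMap := f.comp (toAb k V).symm.toLinearMap
    map_lie' := by
      intro x y
      show f.comp (toAb k V).symm.toLinearMap ((0 : Ab V)) = ⁅_, _⁆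
      rw [LieRing.of_associative_ring_bracket]
      simp only [map_zero]
      exact (sub_eq_zero.2 (hf _ _)).symm }

/-- The universal property of `u(h)`: a linear map `f : h → A` with commuting images
satisfying `f(x)^p = f(x^{[p]})` extends to an algebra map `u(h) → A`. -/
noncomputable def extendAlg {A : Type} [Ring A] [Algebra k A] (f : V →ₗ[k] A)
    (hf : ∀ x y : V, f x * f y = f y * f x)
    (hp : ∀ x : V, f x ^ p = f (AbRes.pMap (p := p) (k := k) x)) :
    uRes p k V →ₐ[k] A :=
  RingQuot.liftAlgHom k
    ⟨UniversalEnvelopingAlgebra.lift k (lieHomOfLinear (k := k) (V := V) f hf), by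
      rintro a b ⟨x, rfl, rfl⟩
      simp only [map_pow, UniversalEnvelopingAlgebra.lift_ι_apply]
      exact hp x⟩

@[simp] lemma extendAlg_mkι {A : Type} [Ring A] [Algebra k A] (f : V →ₗ[k] A)
    (hf : ∀ x y : V, f x * f y = f y * f x)
    (hp : ∀ x : V, f x ^ p = f (AbRes.pMap (p := p) (k := k) x)) (x : V) :
    extendAlg p k V f hf hp (mkι p k V x) = f x := by
  show RingQuot.liftAlgHom k _
    ((RingQuot.mkAlgHom k (uRel p k V)) (UniversalEnvelopingAlgebra.ι k (toAb k V x))) = f x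
  rw [RingQuot.liftAlgHom_mkAlgHom_apply, UniversalEnvelopingAlgebra.lift_ι_apply]
  rfl

/-- The counit `ε : u(h) → k`. -/
noncomputable def counit : uRes p k V →ₐ[k] k :=
  extendAlg p k V (0 : V →ₗ[k] k) (by intros; simp) (by
    intro x
    simp [zero_pow (Nat.Prime.ne_zero (Fact.out : Nat.Prime p))])

/-- The augmentation ideal `u(h)⁺`, as a submodule. -/
noncomputable def Aplus : Submodule k (uRes p k V) :=
  LinearMap.ker (counit p k V).toLinearMap

/-- `(u(h)⁺)^{⊗2}` viewed inside `u(h) ⊗ u(h)`. -/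
noncomputable def AplusSq : Submodule k (uRes p k V ⊗[k] uRes p k V) :=
  Submodule.map₂ (TensorProduct.mk k (uRes p k V) (uRes p k V)) (Aplus p k V) (Aplus p k V)

/-- The comultiplication `Δ : u(h) → u(h) ⊗ u(h)`, the algebra map making every element
of `h` primitive. -/
noncomputable def comul : uRes p k V →ₐ[k] uRes p k V ⊗[k] uRes p k V :=
  extendAlg p k V
    (((TensorProduct.mk k (uRes p k V) (uRes p k V)).flip 1).comp (mkι p k V)
      + (TensorProduct.mk k (uRes p k V) (uRes p k V) 1).comp (mkι p k V))
    (by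
      intro x y
      simp only [LinearMap.add_apply, LinearMap.coe_comp, Function.comp_apply,
        TensorProduct.mk_apply, LinearMap.flip_apply]
      simp only [add_mul, mul_add, Algebra.TensorProduct.tmul_mul_tmul, one_mul, mul_one,
        mkι_comm p k V x y]
      abel)
    (by
      intro x
      simp only [LinearMap.add_apply, LinearMap.coe_comp, Function.comp_apply,
        TensorProduct.mk_apply, LinearMap.flip_apply]
      have hc : Commute ((mkι p k V x) ⊗ₜ[k] (1 : uRes p k V))
          ((1 : uRes p k V) ⊗ₜ[k] (mkι p k V x)) := by
        unfold Commute SemiconjBy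
        simp [Algebra.TensorProduct.tmul_mul_tmul]
      rw [add_pow_charP p k hc, Algebra.TensorProduct.tmul_pow, Algebra.TensorProduct.tmul_pow,
        one_pow, mkι_pow])

/-- The first cobar differential `∂¹(r) = 1 ⊗ r − Δ(r) + r ⊗ 1`. -/
noncomputable def d1 : uRes p k V →ₗ[k] uRes p k V ⊗[k] uRes p k V :=
  TensorProduct.mk k (uRes p k V) (uRes p k V) 1 - (comul p k V).toLinearMap
    + (TensorProduct.mk k (uRes p k V) (uRes p k V)).flip 1

/-- The second cobar differential `∂²(r ⊗ s) = 1 ⊗ r ⊗ s − Δ(r) ⊗ s + r ⊗ Δ(s) − r ⊗ s ⊗ 1`. -/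
noncomputable def d2 : uRes p k V ⊗[k] uRes p k V →ₗ[k]
    uRes p k V ⊗[k] (uRes p k V ⊗[k] uRes p k V) :=
  TensorProduct.mk k (uRes p k V) (uRes p k V ⊗[k] uRes p k V) 1
    - (TensorProduct.assoc k (uRes p k V) (uRes p k V) (uRes p k V)).toLinearMap.comp
        (LinearMap.rTensor (uRes p k V) (comul p k V).toLinearMap)
    + LinearMap.lTensor (uRes p k V) (comul p k V).toLinearMap
    - (TensorProduct.assoc k (uRes p k V) (uRes p k V) (uRes p k V)).toLinearMap.comp
        ((TensorProduct.mk k (uRes p k V ⊗[k] uRes p k V) (uRes p k V)).flip 1)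

/-- The element `ω(r) = ∑_{i=1}^{p−1} ((p−1)!/(i!(p−i)!)) rⁱ ⊗ r^{p−i}`. -/
noncomputable def omega (r : uRes p k V) : uRes p k V ⊗[k] uRes p k V :=
  ∑ i ∈ Finset.Ico 1 p,
    ((Nat.factorial (p-1) / (Nat.factorial i * Nat.factorial (p - i)) : ℕ) : k) •
      ((r ^ i) ⊗ₜ[k] (r ^ (p - i)))

/-- The extension of `ρ_z : h → h` (with `ρ_z ∘ [p] = 0`) to a derivation of `u(h)`,
constructed through the trivial square-zero extension. -/
noncomputable def Dres (f : V →ₗ[k] V)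
    (hf : ∀ x : V, f (AbRes.pMap (p := p) (k := k) x) = 0) :
    uRes p k V →ₗ[k] uRes p k V :=
  ((TrivSqZeroExt.sndHom (uRes p k V) (uRes p k V)).restrictScalars k).comp
    (extendAlg p k V
      ({ toFun := fun x => TrivSqZeroExt.inl (mkι p k V x)
              + TrivSqZeroExt.inr (mkι p k V (f x))
         map_add' := by
          intro x y
          simp only [map_add, TrivSqZeroExt.inl_add, TrivSqZeroExt.inr_add]
          abel
         map_smul' := by
          intro c x
          simp only [map_smul, TrivSqZeroExt.inl_smul, TrivSqZeroExt.inr_smul, smul_add,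
            RingHom.id_apply] } : V →ₗ[k] TrivSqZeroExt (uRes p k V) (uRes p k V))
      (by
        intro x y
        simp only [LinearMap.coe_mk, AddHom.coe_mk]
        simp only [add_mul, mul_add, TrivSqZeroExt.inl_mul_inl, TrivSqZeroExt.inl_mul_inr,
          TrivSqZeroExt.inr_mul_inl, TrivSqZeroExt.inr_mul_inr, smul_eq_mul,
          MulOpposite.smul_eq_mul_unop, MulOpposite.unop_op]
        rw [mkι_comm p k V x y, mkι_comm p k V x (f y), mkι_comm p k V (f x) y]
        abel
      )
      (by
        intro x
        simp only [LinearMap.coe_mk, AddHom.coe_mk]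
        have hc : Commute
            (TrivSqZeroExt.inl (mkι p k V x) : TrivSqZeroExt (uRes p k V) (uRes p k V))
            (TrivSqZeroExt.inr (mkι p k V (f x))) := by
          unfold Commute SemiconjBy
          rw [TrivSqZeroExt.inl_mul_inr, TrivSqZeroExt.inr_mul_inl, smul_eq_mul,
            MulOpposite.smul_eq_mul_unop, MulOpposite.unop_op, mkι_comm]
        rw [add_pow_charP p k hc]
        have h2 : (TrivSqZeroExt.inr (mkι p k V (f x)) :
            TrivSqZeroExt (uRes p k V) (uRes p k V)) ^ p = 0 := by
          have h2' : (TrivSqZeroExt.inr (mkι p k V (f x)) :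
              TrivSqZeroExt (uRes p k V) (uRes p k V)) ^ 2 = 0 := by
            rw [sq, TrivSqZeroExt.inr_mul_inr]
          have hle : 2 + (p - 2) = p := by
            have := (Fact.out : Nat.Prime p).two_le
            omega
          have hv : (TrivSqZeroExt.inr (mkι p k V (f x)) :
              TrivSqZeroExt (uRes p k V) (uRes p k V)) ^ p
              = (TrivSqZeroExt.inr (mkι p k V (f x)) :
              TrivSqZeroExt (uRes p k V) (uRes p k V)) ^ (2 + (p - 2)) := by rw [hle]
          rw [hv, pow_add, h2', zero_mul]
        have h3 : (TrivSqZeroExt.inl (mkι p k V x) :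
            TrivSqZeroExt (uRes p k V) (uRes p k V)) ^ p
            = TrivSqZeroExt.inl ((mkι p k V x) ^ p) :=
          (map_pow (TrivSqZeroExt.inlHom (uRes p k V) (uRes p k V)) (mkι p k V x) p).symm
        rw [h2, add_zero, h3, mkι_pow, hf x, map_zero, TrivSqZeroExt.inr_zero, add_zero]
      )).toLinearMap

/-- The action of `ρ_z` on `u(h) ⊗ u(h)`, i.e. `ρ ⊗ 1 + 1 ⊗ ρ`. -/
noncomputable def Dtens (f : V →ₗ[k] V)
    (hf : ∀ x : V, f (AbRes.pMap (p := p) (k := k) x) = 0) :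
    uRes p k V ⊗[k] uRes p k V →ₗ[k] uRes p k V ⊗[k] uRes p k V :=
  LinearMap.rTensor (uRes p k V) (Dres p k V f hf)
    + LinearMap.lTensor (uRes p k V) (Dres p k V f hf)

/-- `Φ_z` in (cobar) degree 1: `Φ_z(r) = r^p − λ r + ρ_z^{p−1}(r)`. -/
noncomputable def Phi1 (lam : k) (f : V →ₗ[k] V)
    (hf : ∀ x : V, f (AbRes.pMap (p := p) (k := k) x) = 0) (r : uRes p k V) : uRes p k V :=
  r ^ p - lam • r + ((Dres p k V f hf) ^ (p - 1) : uRes p k V →ₗ[k] uRes p k V) r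

/-- `Φ_z` in (cobar) degree 2: `Φ_z(χ) = χ^p − λ χ + (ρ_z ⊗ 1 + 1 ⊗ ρ_z)^{p−1}(χ)`,
the `p`-th power being the one of the ring `u(h) ⊗ u(h)`. -/
noncomputable def Phi2 (lam : k) (f : V →ₗ[k] V)
    (hf : ∀ x : V, f (AbRes.pMap (p := p) (k := k) x) = 0)
    (χ : uRes p k V ⊗[k] uRes p k V) : uRes p k V ⊗[k] uRes p k V :=
  χ ^ p - lam • χ
    + ((Dtens p k V f hf) ^ (p - 1) :
        uRes p k V ⊗[k] uRes p k V →ₗ[k] uRes p k V ⊗[k] uRes p k V) χ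

end Core

section Rep

variable (p : ℕ) [Fact (Nat.Prime p)] (k : Type) [Field k] [CharP k p]
variable {G V : Type} [AddCommGroup G] [Module k G] [AddCommGroup V] [Module k V]
variable [AbRes p k G] [AbRes p k V]

/-- An algebraic representation of the abelian restricted Lie algebra `g` on the abelian
restricted Lie algebra `h` (conditions (i)–(iv) of the definition of an algebraic
representation, specialized to abelian restricted Lie algebras: condition (iii) is then
vacuous, and in condition (iv) the right-hand side vanishes). -/
structure IsAlgebraicRep (ρ : G →ₗ[k] Module.End k V) : Prop where
  comm : ∀ x y : G, ρ x * ρ y = ρ y * ρ x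
  map_pMap : ∀ x : G, ρ (AbRes.pMap (p := p) (k := k) x) = ρ x ^ p
  annih : ∀ (x : G) (a : V), ρ x (AbRes.pMap (p := p) (k := k) a) = 0

end Rep


section More

variable (p : ℕ) [Fact (Nat.Prime p)] (k : Type) [Field k] [CharP k p]
variable (V : Type) [AddCommGroup V] [Module k V] [AbRes p k V]

/-- The functorial extension of a linear map of abelian restricted Lie algebras commuting
with the restricted maps, to an algebra map `u(h) → u(h')` (a morphism of Hopf algebras). -/
noncomputable def uResMap (W : Type) [AddCommGroup W] [Module k W] [AbRes p k W]
    (f : V →ₗ[k] W)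
    (hcompat : ∀ x : V, f (AbRes.pMap (p := p) (k := k) x)
      = AbRes.pMap (p := p) (k := k) (f x)) : uRes p k V →ₐ[k] uRes p k W :=
  extendAlg p k V ((mkι p k W).comp f) (fun x y => mkι_comm p k W (f x) (f y))
    (fun x => by
      simp only [LinearMap.coe_comp, Function.comp_apply]
      rw [mkι_pow, hcompat])

/-- `Φ_z` restricted to `h ⊆ u(h)`: `Φ_z(r) = r^{[p]} − λ r + ρ_z^{p−1}(r)`
(for `r ∈ h` one has `r^p = r^{[p]}` in `u(h)`). -/
noncomputable def PhiV (lam : k) (f : Module.End k V) : V → V :=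
  fun r => AbRes.pMap (p := p) (k := k) r - lam • r + (f ^ (p - 1)) r

/-- The abelian type determined by `ρ_z = f` and `z^{[p]} = λ z` is *permissible* if
`Ker ρ_z = Im Φ_z` on `h`. -/
noncomputable def Permissible (lam : k) (f : Module.End k V) : Prop :=
  {r : V | f r = 0} = Set.range (PhiV p k V lam f)

end More

section Iso

variable (p : ℕ) (k : Type) [Field k]

/-- An isomorphism of (abelian) restricted Lie algebras: a linear equivalence commuting
with the restricted maps. -/
structure RestrictedLieIso (V W : Type) [AddCommGroup V] [Module k V] [AddCommGroup W]
    [Module k W] [AbRes p k V] [AbRes p k W] extends V ≃ₗ[k] W where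
  map_pMap : ∀ x : V, toLinearEquiv (AbRes.pMap (p := p) (k := k) x)
    = AbRes.pMap (p := p) (k := k) (toLinearEquiv x)

/-- An isomorphism of abelian types `T = (g, h, ρ) → T' = (g', h', ρ')` : a pair
`(φ₁ : g' → g, φ₂ : h → h')` of restricted Lie algebra isomorphisms intertwining `ρ`
and `ρ'`. -/
structure AbTypeIso {G V G' V' : Type}
    [AddCommGroup G] [Module k G] [AddCommGroup V] [Module k V]
    [AddCommGroup G'] [Module k G'] [AddCommGroup V'] [Module k V']
    [AbRes p k G] [AbRes p k V] [AbRes p k G'] [AbRes p k V']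
    (ρ : G →ₗ[k] Module.End k V) (ρ' : G' →ₗ[k] Module.End k V') where
  e1 : RestrictedLieIso p k G' G
  e2 : RestrictedLieIso p k V V'
  compat : ∀ (x' : G') (a : V),
    e2.toLinearEquiv (ρ (e1.toLinearEquiv x') a) = ρ' x' (e2.toLinearEquiv a)

end Iso

section Hopf

variable (k : Type) [Field k]

/-- The primitive space `P(H)` of a bialgebra `H`. -/
noncomputable def primSpace (H : Type) [Ring H] [Bialgebra k H] : Submodule k H where
  carrier := {x : H | Coalgebra.comul (R := k) x = x ⊗ₜ[k] (1 : H) + (1 : H) ⊗ₜ[k] x}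
  add_mem' := by
    intro a b ha hb
    simp only [Set.mem_setOf_eq] at *
    rw [map_add, ha, hb, TensorProduct.add_tmul, TensorProduct.tmul_add]
    abel
  zero_mem' := by simp
  smul_mem' := by
    intro c x hx
    simp only [Set.mem_setOf_eq] at *
    rw [map_smul, hx, smul_add, TensorProduct.smul_tmul', ← TensorProduct.tmul_smul]

/-- A subcoalgebra of a bialgebra, as a submodule `C` with `Δ(C) ⊆ C ⊗ C`. -/
def IsSubcoalgebra (H : Type) [Ring H] [Bialgebra k H] (C : Submodule k H) : Prop :=
  ∀ x ∈ C, Coalgebra.comul (R := k) x ∈ Submodule.map₂ (TensorProduct.mk k H H) C C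

/-- A simple subcoalgebra: a nonzero subcoalgebra with no nonzero proper subcoalgebras. -/
def IsSimpleSubcoalgebra (H : Type) [Ring H] [Bialgebra k H] (C : Submodule k H) : Prop :=
  C ≠ ⊥ ∧ IsSubcoalgebra k H C ∧
    ∀ D ≤ C, IsSubcoalgebra k H D → D = ⊥ ∨ D = C

/-- The coradical of a bialgebra: the sum of all its simple subcoalgebras. -/
noncomputable def coradical (H : Type) [Ring H] [Bialgebra k H] : Submodule k H :=
  sSup {C | IsSimpleSubcoalgebra k H C}

/-- A (finite-dimensional) bialgebra is connected if its coradical is one-dimensional. -/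
def IsConnectedCoalg (H : Type) [Ring H] [Bialgebra k H] : Prop :=
  Module.finrank k ↥(coradical k H) = 1

/-- An isomorphism of Hopf algebras: an algebra isomorphism compatible with the
comultiplications and the counits. -/
structure HopfAlgIso (H1 H2 : Type) [Ring H1] [Ring H2] [HopfAlgebra k H1]
    [HopfAlgebra k H2] extends H1 ≃ₐ[k] H2 where
  map_comul : ∀ a : H1, Coalgebra.comul (R := k) (toAlgEquiv a)
      = TensorProduct.map toAlgEquiv.toLinearMap toAlgEquiv.toLinearMap
          (Coalgebra.comul (R := k) a)
  map_counit : ∀ a : H1, Coalgebra.counit (R := k) (toAlgEquiv a) = Coalgebra.counit (R := k) a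

end Hopf

section Realization

variable (p : ℕ) [Fact (Nat.Prime p)] (k : Type) [Field k] [CharP k p]
variable (n : ℕ) (V : Type) [AddCommGroup V] [Module k V] [AbRes p k V]

/-- A realization of the primitive deformation `u_z(D)` of `u(T)` associated to a datum
`D = (T, Θ, χ)` and `0 ≠ z ∈ g` with `z^{[p]} = λ z`: a connected Hopf algebra `H` of
dimension `p^{n+1}` containing `u(h)` as a Hopf subalgebra and an element `Z` satisfying
the deformed relations `[Z, r] = ρ_z(r)`, `Z^p − λZ + Θ = 0`,
`Δ(Z) = Z ⊗ 1 + 1 ⊗ Z + χ`, generating `H` over `u(h)`, and whose primitive space is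
exactly (the image of) `h`.  Here `D : u(h) → u(h)` is the derivation extending `ρ_z`. -/
structure PDRealization (D : uRes p k V →ₗ[k] uRes p k V) (lam : k) (Θ : uRes p k V)
    (χ : uRes p k V ⊗[k] uRes p k V) : Type 1 where
  H : Type
  [ringH : Ring H]
  [hopfH : HopfAlgebra k H]
  findim : Module.finrank k H = p ^ (n + 1)
  connected : IsConnectedCoalg k H
  j : uRes p k V →ₐ[k] H
  j_inj : Function.Injective j
  j_comul : ∀ a : uRes p k V, Coalgebra.comul (R := k) (j a)
      = TensorProduct.map j.toLinearMap j.toLinearMap (comul p k V a)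
  j_counit : ∀ a : uRes p k V, Coalgebra.counit (R := k) (j a) = counit p k V a
  Z : H
  gen : Algebra.adjoin k (Set.range j ∪ {Z}) = ⊤
  commZ : ∀ a : uRes p k V, Z * j a - j a * Z = j (D a)
  powZ : Z ^ p - lam • Z + j Θ = 0
  comulZ : Coalgebra.comul (R := k) Z
      = Z ⊗ₜ[k] (1 : H) + (1 : H) ⊗ₜ[k] Z
        + TensorProduct.map j.toLinearMap j.toLinearMap χ
  prim : primSpace k H = Submodule.map (j.toLinearMap ∘ₗ mkι p k V) ⊤

/-- `D = (T, Θ, χ)` is a PD datum with respect to `z` (with `z^{[p]} = λz` and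
`D` the derivation of `u(h)` extending `ρ_z`) iff the corresponding primitive
deformation `u_z(D)` exists, i.e. is a `p^{n+1}`-dimensional connected Hopf algebra whose
primitive space is (isomorphic to) `h`. -/
def IsPDDatum (D : uRes p k V →ₗ[k] uRes p k V) (lam : k) (Θ : uRes p k V)
    (χ : uRes p k V ⊗[k] uRes p k V) : Prop :=
  Nonempty (PDRealization p k n V D lam Θ χ)

/-- Hopf algebra isomorphisms between (the underlying Hopf algebras of) two primitive
deformation realizations. -/
def RealIso {n' : ℕ} {V' : Type} [AddCommGroup V'] [Module k V'] [AbRes p k V']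
    {D : uRes p k V →ₗ[k] uRes p k V} {lam : k} {Θ : uRes p k V}
    {χ : uRes p k V ⊗[k] uRes p k V}
    {D' : uRes p k V' →ₗ[k] uRes p k V'} {lam' : k} {Θ' : uRes p k V'}
    {χ' : uRes p k V' ⊗[k] uRes p k V'}
    (R : PDRealization p k n V D lam Θ χ)
    (R' : PDRealization p k n' V' D' lam' Θ' χ') : Type :=
  letI := R.ringH; letI := R.hopfH; letI := R'.ringH; letI := R'.hopfH
  HopfAlgIso k R.H R'.H

end Realization

section Points

variable (p n : ℕ) [Fact (Nat.Prime p)] (k : Type) [Field k] [CharP k p]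
variable (V : Type) [AddCommGroup V] [Module k V] [AbRes p k V]

/-- Index set for the coordinates `a_{ij}`, `1 ≤ i < j ≤ n`. -/
abbrev UpperIdx (n : ℕ) : Type := {ij : Fin n × Fin n // ij.1 < ij.2}

/-- A point of the affine space `𝔸^{n(n+1)/2}`, with coordinates `(a_{ij}, b_k)`. -/
abbrev Pt (n : ℕ) (k : Type) : Type := (UpperIdx n → k) × (Fin n → k)

/-- The 2-cocycle `χ_P = ∑_{i<j} a_{ij} x_i ⊗ x_j + ω(∑_k b_k x_k)` associated to a point
`P ∈ 𝔸^{n(n+1)/2}` and a basis `x` of `h`. -/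
noncomputable def chiP (x : Module.Basis (Fin n) k V) (P : Pt n k) :
    uRes p k V ⊗[k] uRes p k V :=
  (∑ q : UpperIdx n,
      P.1 q • ((mkι p k V (x q.1.1)) ⊗ₜ[k] (mkι p k V (x q.1.2))))
    + omega p k V (mkι p k V (∑ j, P.2 j • x j))

/-- A point `P` is admissible w.r.t. the type `T` if there is `s ∈ u(h)⁺` with
`Φ_z(χ_P) = ∂¹(s)` and `ρ_z(s) = 0`. -/
noncomputable def IsAdmissible (lam : k) (f : V →ₗ[k] V)
    (hf : ∀ a : V, f (AbRes.pMap (p := p) (k := k) a) = 0)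
    (x : Module.Basis (Fin n) k V) (P : Pt n k) : Prop :=
  ∃ s ∈ Aplus p k V, Phi2 p k V lam f hf (chiP p n k V x P) = d1 p k V s
    ∧ Dres p k V f hf s = 0

/-- The characterization of PD data: `(T, Θ, χ)` is a PD datum w.r.t. `z` iff `χ` is a
2-cocycle which is not a 2-coboundary, `ρ_z(Θ) = 0` and `Φ_z(χ) = ∂¹(Θ)`. -/
noncomputable def IsPDDatumC (lam : k) (f : V →ₗ[k] V)
    (hf : ∀ a : V, f (AbRes.pMap (p := p) (k := k) a) = 0)
    (Θ : uRes p k V) (χ : uRes p k V ⊗[k] uRes p k V) : Prop :=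
  Θ ∈ Aplus p k V ∧ χ ∈ AplusSq p k V ∧ d2 p k V χ = 0 ∧
    (¬ ∃ s ∈ Aplus p k V, χ = d1 p k V s) ∧
    Dres p k V f hf Θ = 0 ∧ Phi2 p k V lam f hf χ = d1 p k V Θ

/-- The equivalence relation on PD data defining `ℋ²(T)`:
`(Θ, χ) ∼ (Θ', χ')` iff `Θ' − Θ = Φ_z(s)` and `χ' − χ = ∂¹(s)` for some `s ∈ u(h)⁺`. -/
noncomputable def PDEquiv (lam : k) (f : V →ₗ[k] V)
    (hf : ∀ a : V, f (AbRes.pMap (p := p) (k := k) a) = 0)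
    (d d' : uRes p k V × (uRes p k V ⊗[k] uRes p k V)) : Prop :=
  ∃ s ∈ Aplus p k V, d'.1 - d.1 = Phi1 p k V lam f hf s ∧ d'.2 - d.2 = d1 p k V s

/-- The action of an automorphism `φ = (γ, G) ∈ Aut(T)` on points of `𝔸^{n(n+1)/2}`:
`ã_{ij} = ∑_{r<s} γ(G_{ri}G_{sj} − G_{rj}G_{si}) a_{rs}`,
`b̃_k = ∑_s γ^{1/p} G_{sk} b_s`. -/
noncomputable def actPt [PerfectRing k p] (γ : k) (Gm : Matrix (Fin n) (Fin n) k)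
    (P : Pt n k) : Pt n k :=
  (fun q' => ∑ q : UpperIdx n,
      γ * (Gm q.1.1 q'.1.1 * Gm q.1.2 q'.1.2 - Gm q.1.1 q'.1.2 * Gm q.1.2 q'.1.1) * P.1 q,
   fun j => ∑ s : Fin n, (frobeniusEquiv k p).symm γ * Gm s j * P.2 s)

end Points

end PD


section Aux

open PD

variable {p : ℕ} [Fact (Nat.Prime p)] {k : Type} [Field k] [CharP k p]
variable {V : Type} [AddCommGroup V] [Module k V] [AbRes p k V]
variable {n : ℕ}

/-- Coefficients of equal basis combinations agree. -/
private lemma coeff_eq (x : Module.Basis (Fin n) k V) (c d : Fin n → k)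
    (h : ∑ j, c j • x j = ∑ j, d j • x j) : c = d := by
  calc c = ⇑(x.repr (∑ j, c j • x j)) := (x.repr_sum_self c).symm
    _ = ⇑(x.repr (∑ j, d j • x j)) := by rw [h]
    _ = d := x.repr_sum_self d

/-- Expansion of a linear map in coordinates. -/
private lemma map_basis_sum {W : Type} [AddCommGroup W] [Module k W]
    {F : Type} [FunLike F V W] [LinearMapClass F k V W]
    (x : Module.Basis (Fin n) k V) (y : Fin n → W) (f : F)
    (A : Matrix (Fin n) (Fin n) k) (hA : ∀ i, f (x i) = ∑ j, A i j • y j)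
    (a : Fin n → k) :
    f (∑ i, a i • x i) = ∑ l, (∑ i, a i * A i l) • y l := by
  rw [map_sum]
  calc ∑ i, f (a i • x i) = ∑ i, ∑ l, (a i * A i l) • y l := by
        refine Finset.sum_congr rfl fun i _ => ?_
        rw [map_smul, hA i, Finset.smul_sum]
        exact Finset.sum_congr rfl fun l _ => (smul_smul _ _ _)
    _ = ∑ l, (∑ i, a i * A i l) • y l := by
        rw [Finset.sum_comm]
        exact Finset.sum_congr rfl fun l _ => (Finset.sum_smul).symm

/-- Expansion of the p-map in coordinates. -/
private lemma pMap_basis_sum (x : Module.Basis (Fin n) k V) (R : Matrix (Fin n) (Fin n) k)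
    (hR : ∀ i, AbRes.pMap (p := p) (k := k) (x i) = ∑ j, R i j • x j)
    (a : Fin n → k) :
    AbRes.pMap (p := p) (k := k) (∑ i, a i • x i)
      = ∑ j, (∑ i, a i ^ p * R i j) • x j := by
  have hsum : AbRes.pMap (p := p) (k := k) (∑ i, a i • x i)
      = ∑ i, AbRes.pMap (p := p) (k := k) (a i • x i) :=
    map_sum (AddMonoidHom.mk' (AbRes.pMap (p := p) (k := k))
      (AbRes.pMap_add (p := p) (k := k))) _ _
  rw [hsum]
  calc ∑ i, AbRes.pMap (p := p) (k := k) (a i • x i)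
      = ∑ i, ∑ j, (a i ^ p * R i j) • x j := by
        refine Finset.sum_congr rfl fun i _ => ?_
        rw [AbRes.pMap_smul, hR i, Finset.smul_sum]
        exact Finset.sum_congr rfl fun j _ => (smul_smul _ _ _)
    _ = ∑ j, (∑ i, a i ^ p * R i j) • x j := by
        rw [Finset.sum_comm]
        exact Finset.sum_congr rfl fun j _ => (Finset.sum_smul).symm

end Aux

open PD in
/-- Suppose two abelian types `T = (g, h, ρ)` and `T' = (g, h, ρ')` are
given, w.r.t. fixed bases `z` of `g` and `x_1, …, x_n` of `h`, by triples `(λ, R, M)`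
and `(λ, R, M')`.  Then `T ≅ T'` iff there exist an invertible matrix `G` and `γ ≠ 0`
with `ĜR = RG`, `γ^pλ = γλ`, and `M' = γ·G⁻¹MG`, where `Ĝ` is obtained from `G` by
taking `p`-th powers of all entries. -/
theorem type_iso_iff_matrix_conditions
    (p n : ℕ) [Fact (Nat.Prime p)] (hp2 : 2 < p)
    (k : Type) [Field k] [CharP k p] [IsAlgClosed k]
    (G V : Type) [AddCommGroup G] [Module k G] [AddCommGroup V] [Module k V]
    [AbRes p k G] [AbRes p k V] (hn : 1 ≤ n)
    (hg : Module.finrank k G = 1)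
    (z : G) (hz : Submodule.span k {z} = ⊤) (hz0 : z ≠ 0)
    (lam : k) (hlam : AbRes.pMap (p := p) (k := k) z = lam • z)
    (x : Module.Basis (Fin n) k V)
    (R M M' : Matrix (Fin n) (Fin n) k)
    (hR : ∀ i, AbRes.pMap (p := p) (k := k) (x i) = ∑ j, R i j • x j)
    (ρ ρ' : G →ₗ[k] Module.End k V)
    (hrep : IsAlgebraicRep p k ρ) (hrep' : IsAlgebraicRep p k ρ')
    (hM : ∀ i, ρ z (x i) = ∑ j, M i j • x j)
    (hM' : ∀ i, ρ' z (x i) = ∑ j, M' i j • x j) :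
    Nonempty (AbTypeIso p k ρ ρ') ↔
      ∃ (Gm : Matrix (Fin n) (Fin n) k) (γ : k), IsUnit Gm ∧ γ ≠ 0 ∧
        (Gm.map (· ^ p)) * R = R * Gm ∧ γ ^ p * lam = γ * lam ∧
        M' = γ • (Gm⁻¹ * M * Gm) := by
  haveI : ExpChar k p := ExpChar.prime Fact.out
  have hzmem : ∀ g : G, ∃ a : k, a • z = g := by
    intro g
    have : g ∈ Submodule.span k {z} := by rw [hz]; exact Submodule.mem_top
    exact Submodule.mem_span_singleton.mp this
  have hpG : ∀ a : k, AbRes.pMap (p := p) (k := k) (a • z) = (a ^ p * lam) • z := by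
    intro a; rw [AbRes.pMap_smul, hlam, smul_smul]
  constructor
  · rintro ⟨φ⟩
    set φ₁ := φ.e1.toLinearEquiv with hφ₁
    set φ₂ := φ.e2.toLinearEquiv with hφ₂
    have hmp1 : ∀ g : G, φ₁ (AbRes.pMap (p := p) (k := k) g)
        = AbRes.pMap (p := p) (k := k) (φ₁ g) := φ.e1.map_pMap
    have hmp2 : ∀ v : V, φ₂ (AbRes.pMap (p := p) (k := k) v)
        = AbRes.pMap (p := p) (k := k) (φ₂ v) := φ.e2.map_pMap
    have hcomp : ∀ (x' : G) (a : V), φ₂ (ρ (φ₁ x') a) = ρ' x' (φ₂ a) := φ.compat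
    obtain ⟨γ, hγz⟩ : ∃ γ : k, γ • z = φ₁ z := hzmem (φ₁ z)
    have hγ0 : γ ≠ 0 := by
      rintro rfl
      rw [zero_smul] at hγz
      exact hz0 (φ₁.injective (show φ₁ z = φ₁ 0 by rw [← hγz, map_zero]))
    set Gm : Matrix (Fin n) (Fin n) k := Matrix.of fun i j => x.repr (φ₂ (x i)) j with hGmdef
    have hφx : ∀ i, φ₂ (x i) = ∑ j, Gm i j • x j := fun i => (x.sum_repr (φ₂ (x i))).symm
    -- Gm is invertible
    have hGmT : Gm.transpose = LinearMap.toMatrix x x (φ₂ : V →ₗ[k] V) := by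
      ext i j
      rw [LinearMap.toMatrix_apply]
      rfl
    have hU : IsUnit (LinearMap.toMatrix x x (φ₂ : V →ₗ[k] V)) := by
      refine ⟨⟨_, LinearMap.toMatrix x x (φ₂.symm : V →ₗ[k] V), ?_, ?_⟩, rfl⟩
      · rw [← LinearMap.toMatrix_comp x x x]
        have hcc : (φ₂ : V →ₗ[k] V).comp (φ₂.symm : V →ₗ[k] V) = LinearMap.id := by
          ext v; simp
        rw [hcc, LinearMap.toMatrix_id]
      · rw [← LinearMap.toMatrix_comp x x x]
        have hcc : (φ₂.symm : V →ₗ[k] V).comp (φ₂ : V →ₗ[k] V) = LinearMap.id := by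
          ext v; simp
        rw [hcc, LinearMap.toMatrix_id]
    have hGmUnit : IsUnit Gm := by
      rw [Matrix.isUnit_iff_isUnit_det, ← Matrix.det_transpose, hGmT,
        ← Matrix.isUnit_iff_isUnit_det]
      exact hU
    -- first condition
    have hcond1 : (Gm.map (· ^ p)) * R = R * Gm := by
      ext i l
      have h1 : φ₂ (AbRes.pMap (p := p) (k := k) (x i))
          = ∑ l, (∑ j, R i j * Gm j l) • x l := by
        rw [hR i]
        exact map_basis_sum x x φ₂ Gm hφx (fun j => R i j)
      have h2 : φ₂ (AbRes.pMap (p := p) (k := k) (x i))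
          = ∑ l, (∑ j, Gm i j ^ p * R j l) • x l := by
        rw [hmp2 (x i), hφx i]
        exact pMap_basis_sum x R hR (fun j => Gm i j)
      have hc := coeff_eq x _ _ (h1.symm.trans h2)
      show (Gm.map (· ^ p) * R) i l = (R * Gm) i l
      rw [Matrix.mul_apply, Matrix.mul_apply]
      simp only [Matrix.map_apply]
      exact (congrFun hc l).symm
    -- second condition
    have hcond2 : γ ^ p * lam = γ * lam := by
      have h1 : φ₁ (AbRes.pMap (p := p) (k := k) z) = (lam * γ) • z := by
        rw [hlam, map_smul, ← hγz, smul_smul]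
      have h2 : φ₁ (AbRes.pMap (p := p) (k := k) z) = (γ ^ p * lam) • z := by
        rw [hmp1 z, ← hγz, hpG γ]
      have h12 := smul_left_injective k hz0 (h1.symm.trans h2)
      rw [← h12]
      exact mul_comm lam γ
    -- third condition
    have hGmMM' : Gm * M' = γ • (M * Gm) := by
      ext i l
      have hcompat := hcomp z (x i)
      rw [← hγz] at hcompat
      have hL : φ₂ (ρ (γ • z) (x i)) = ∑ l, (γ * ∑ j, M i j * Gm j l) • x l := by
        rw [map_smul ρ, LinearMap.smul_apply, map_smul, hM i,
          map_basis_sum x x φ₂ Gm hφx (fun j => M i j), Finset.smul_sum]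
        exact Finset.sum_congr rfl fun l _ => (smul_smul _ _ _)
      have hRr : ρ' z (φ₂ (x i)) = ∑ l, (∑ j, Gm i j * M' j l) • x l := by
        rw [hφx i]
        exact map_basis_sum x x (ρ' z) M' hM' (fun j => Gm i j)
      have hc := coeff_eq x _ _ ((hL.symm.trans hcompat).trans hRr)
      have := congrFun hc l
      show (Gm * M') i l = (γ • (M * Gm)) i l
      rw [Matrix.mul_apply, Matrix.smul_apply, Matrix.mul_apply, smul_eq_mul]
      exact this.symm
    have hdet : IsUnit Gm.det := (Matrix.isUnit_iff_isUnit_det Gm).mp hGmUnit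
    have hM'eq : M' = γ • (Gm⁻¹ * M * Gm) := by
      have h : M' = Gm⁻¹ * (Gm * M') := by
        rw [← Matrix.mul_assoc, Matrix.nonsing_inv_mul Gm hdet, Matrix.one_mul]
      rw [h, hGmMM', Matrix.mul_smul, ← Matrix.mul_assoc]
    exact ⟨Gm, γ, hGmUnit, hγ0, hcond1, hcond2, hM'eq⟩
  · rintro ⟨Gm, γ, hGm, hγ, h1, h2, h3⟩
    have hdet : IsUnit Gm.det := (Matrix.isUnit_iff_isUnit_det Gm).mp hGm
    have hdetT : IsUnit Gm.transpose.det := by rwa [Matrix.det_transpose]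
    -- the linear equivalences
    set e1l : G ≃ₗ[k] G := LinearEquiv.smulOfNeZero k G γ hγ with he1def
    have he1 : ∀ g : G, e1l g = γ • g := fun g => rfl
    set e2l : V ≃ₗ[k] V := Matrix.toLinearEquiv x Gm.transpose hdetT with he2def
    have he2x : ∀ i, e2l (x i) = ∑ j, Gm i j • x j := by
      intro i
      show Matrix.toLin x x Gm.transpose (x i) = _
      rw [Matrix.toLin_self]
      exact Finset.sum_congr rfl fun j _ => by rw [Matrix.transpose_apply]
    have he2sum : ∀ a : Fin n → k,
        e2l (∑ i, a i • x i) = ∑ l, (∑ i, a i * Gm i l) • x l := fun a =>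
      map_basis_sum x x e2l Gm he2x a
    have hRG : ∀ i m, (∑ j, R i j * Gm j m) = ∑ j, Gm i j ^ p * R j m := by
      intro i m
      have h := congrFun (congrFun h1 i) m
      rw [Matrix.mul_apply, Matrix.mul_apply] at h
      simp only [Matrix.map_apply] at h
      exact h.symm
    -- e1 respects the p-map
    have he1p : ∀ g : G, e1l (AbRes.pMap (p := p) (k := k) g)
        = AbRes.pMap (p := p) (k := k) (e1l g) := by
      intro g
      obtain ⟨a, rfl⟩ := hzmem g
      rw [he1, he1, hpG a, smul_smul, smul_smul, hpG (γ * a)]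
      congr 1
      have : (γ * a) ^ p = γ ^ p * a ^ p := mul_pow γ a p
      rw [this]
      linear_combination (-(a ^ p)) * h2
    -- e2 respects the p-map
    have he2p : ∀ v : V, e2l (AbRes.pMap (p := p) (k := k) v)
        = AbRes.pMap (p := p) (k := k) (e2l v) := by
      intro v
      obtain ⟨a, rfl⟩ : ∃ a : Fin n → k, ∑ i, a i • x i = v := ⟨x.repr v, x.sum_repr v⟩
      rw [pMap_basis_sum x R hR a, he2sum a,
        map_basis_sum x x e2l Gm he2x (fun j => ∑ i, a i ^ p * R i j),
        pMap_basis_sum x R hR (fun l => ∑ i, a i * Gm i l)]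
      refine Finset.sum_congr rfl fun m _ => ?_
      congr 1
      calc ∑ j, (∑ i, a i ^ p * R i j) * Gm j m
          = ∑ j, ∑ i, a i ^ p * (R i j * Gm j m) := by
            refine Finset.sum_congr rfl fun j _ => ?_
            rw [Finset.sum_mul]
            exact Finset.sum_congr rfl fun i _ => (mul_assoc _ _ _)
        _ = ∑ i, a i ^ p * ∑ j, R i j * Gm j m := by
            rw [Finset.sum_comm]
            exact Finset.sum_congr rfl fun i _ => (Finset.mul_sum _ _ _).symm
        _ = ∑ i, a i ^ p * ∑ j, Gm i j ^ p * R j m :=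
            Finset.sum_congr rfl fun i _ => by rw [hRG i m]
        _ = ∑ i, ∑ j, a i ^ p * (Gm i j ^ p * R j m) :=
            Finset.sum_congr rfl fun i _ => Finset.mul_sum _ _ _
        _ = ∑ j, ∑ i, a i ^ p * (Gm i j ^ p * R j m) := Finset.sum_comm
        _ = ∑ l, (∑ i, a i * Gm i l) ^ p * R l m := by
            refine Finset.sum_congr rfl fun l _ => ?_
            rw [sum_pow_char, Finset.sum_mul]
            refine Finset.sum_congr rfl fun i _ => ?_
            rw [mul_pow, mul_assoc]
    -- the matrix identity for the representations
    have hinv : Gm * Gm⁻¹ = 1 := Matrix.mul_nonsing_inv Gm hdet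
    have hMM' : Gm * M' = γ • (M * Gm) := by
      rw [h3, Matrix.mul_smul, ← Matrix.mul_assoc, ← Matrix.mul_assoc, hinv, Matrix.one_mul]
    have hentry : ∀ i l, ∑ j, Gm i j * M' j l = γ * ∑ j, M i j * Gm j l := by
      intro i l
      have h := congrFun (congrFun hMM' i) l
      rw [Matrix.mul_apply, Matrix.smul_apply, Matrix.mul_apply, smul_eq_mul] at h
      exact h
    -- the intertwining identity
    have hcent : ∀ v : V, γ • e2l (ρ z v) = ρ' z (e2l v) := by
      intro v
      obtain ⟨a, rfl⟩ : ∃ a : Fin n → k, ∑ i, a i • x i = v := ⟨x.repr v, x.sum_repr v⟩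
      rw [map_basis_sum x x (ρ z) M hM a, he2sum a,
        map_basis_sum x x e2l Gm he2x (fun j => ∑ i, a i * M i j),
        map_basis_sum x x (ρ' z) M' hM' (fun l => ∑ i, a i * Gm i l), Finset.smul_sum]
      refine Finset.sum_congr rfl fun m _ => ?_
      rw [smul_smul]
      congr 1
      calc γ * ∑ j, (∑ i, a i * M i j) * Gm j m
          = ∑ i, a i * (γ * ∑ j, M i j * Gm j m) := by
            rw [Finset.mul_sum]
            calc ∑ j, γ * ((∑ i, a i * M i j) * Gm j m)
                = ∑ j, ∑ i, a i * (γ * (M i j * Gm j m)) := by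
                  refine Finset.sum_congr rfl fun j _ => ?_
                  rw [Finset.sum_mul, Finset.mul_sum]
                  exact Finset.sum_congr rfl fun i _ => by ring
              _ = ∑ i, ∑ j, a i * (γ * (M i j * Gm j m)) := Finset.sum_comm
              _ = ∑ i, a i * (γ * ∑ j, M i j * Gm j m) := by
                  refine Finset.sum_congr rfl fun i _ => ?_
                  rw [Finset.mul_sum, Finset.mul_sum]
        _ = ∑ i, a i * ∑ j, Gm i j * M' j m := by
            refine Finset.sum_congr rfl fun i _ => ?_
            rw [hentry i m]
        _ = ∑ l2, (∑ i, a i * Gm i l2) * M' l2 m := by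
            calc ∑ i, a i * ∑ j, Gm i j * M' j m
                = ∑ i, ∑ j, (a i * Gm i j) * M' j m := by
                  refine Finset.sum_congr rfl fun i _ => ?_
                  rw [Finset.mul_sum]
                  exact Finset.sum_congr rfl fun j _ => by ring
              _ = ∑ j, ∑ i, (a i * Gm i j) * M' j m := Finset.sum_comm
              _ = ∑ l2, (∑ i, a i * Gm i l2) * M' l2 m := by
                  refine Finset.sum_congr rfl fun j _ => ?_
                  rw [Finset.sum_mul]
    refine ⟨⟨⟨e1l, he1p⟩, ⟨e2l, he2p⟩, ?_⟩⟩
    intro x' a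
    obtain ⟨c, rfl⟩ := hzmem x'
    show e2l (ρ (e1l (c • z)) a) = ρ' (c • z) (e2l a)
    simp only [he1 (c • z), map_smul, LinearMap.smul_apply]
    rw [smul_comm γ c]
    congr 1
    exact hcent a
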